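/- (Lemma 1.3.) If F = (f₁, f₂, {f_k}) ∈ čH²(α), then g := φ·f₁ ∈ H², and for every k one has f_k · φ(ζ_k) = g(ζ_k), where φ(ζ_k) := Σ_{n≥0} ĉ(φ,n)ζ_kⁿ ≠ 0 and g(ζ_k) := Σ_{n≥0} ĉ(g,n)ζ_kⁿ. In particular čH²(α) ⊆ ĤH²(α). -/

import Mathlib

open MeasureTheory Complex Filter ComplexConjugate
open scoped Real Topology

noncomputable section

instance : Fact ((0:ℝ) < 2 * Real.pi) := ⟨Real.two_pi_pos⟩

/-- The unit circle, modeled additively as `ℝ / 2πℤ`; the point `t` corresponds to `e^{it}`. -/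
abbrev 𝕋c : Type := AddCircle (2 * Real.pi)

/-- Normalized Lebesgue (Haar) measure on the circle. -/
abbrev m : Measure 𝕋c := AddCircle.haarAddCircle

/-- Squared `L²` norm. -/
def sqNorm (f : 𝕋c → ℂ) : ℝ := ∫ t, ‖f t‖ ^ 2 ∂m

/-- `‖P₋ g‖²`, expressed via Parseval: the sum of `|ĉ(g,n)|²` over `n < 0`. -/
def negSq (g : 𝕋c → ℂ) : ℝ := ∑' n : ℤ, if n < 0 then ‖fourierCoeff g n‖ ^ 2 else 0

/-- Membership in the Hardy space `H²`. -/
def InH2 (f : 𝕋c → ℂ) : Prop := MemLp f 2 m ∧ ∀ n : ℤ, n < 0 → fourierCoeff f n = 0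

/-- Membership in `H²₋ = L² ⊖ H²`. -/
def InH2neg (f : 𝕋c → ℂ) : Prop := MemLp f 2 m ∧ ∀ n : ℤ, 0 ≤ n → fourierCoeff f n = 0

/-- Value of (the analytic extension of) `f` at a point `w` of the unit disk. -/
def evalD (f : 𝕋c → ℂ) (w : ℂ) : ℂ := ∑' n : ℕ, fourierCoeff f (n : ℤ) * w ^ n

/-- `p = P₋ g`: characterization of the negative Riesz projection via Fourier coefficients. -/
def IsPneg (g p : 𝕋c → ℂ) : Prop :=
  MemLp p 2 m ∧ (∀ n : ℤ, n < 0 → fourierCoeff p n = fourierCoeff g n) ∧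
    ∀ n : ℤ, 0 ≤ n → fourierCoeff p n = 0

/-- Analytic polynomials on the circle. -/
def IsAnalyticPoly (p : 𝕋c → ℂ) : Prop :=
  ∃ (N : ℕ) (c : ℕ → ℂ), p = fun t => ∑ j ∈ Finset.range N, c j * fourier (j : ℤ) t

/-- `φ` is outer: `φ ∈ H²` and `{φ·p : p analytic polynomial}` is `L²`-dense in `H²`. -/
def IsOuter (φ : 𝕋c → ℂ) : Prop :=
  InH2 φ ∧ ∀ g : 𝕋c → ℂ, InH2 g → ∀ ε : ℝ, 0 < ε →
    ∃ p, IsAnalyticPoly p ∧ ∫ t, ‖φ t * p t - g t‖ ^ 2 ∂m < ε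

/-- `f ∈ H²` is admissible: it vanishes at all but finitely many of the points `ζ k`. -/
def Admissible (ζ : ℕ → ℂ) (f : 𝕋c → ℂ) : Prop :=
  InH2 f ∧ {k | evalD f (ζ k) ≠ 0}.Finite

/-- The quadratic form `Q(f) = ‖f‖² − ‖P₋(Wf)‖² + Σ ν_k |f(ζ_k)|²`. -/
def Q (W : 𝕋c → ℂ) (ζ : ℕ → ℂ) (ν : ℕ → ℝ) (f : 𝕋c → ℂ) : ℝ :=
  sqNorm f - negSq (fun t => W t * f t) + ∑' k, ν k * ‖evalD f (ζ k)‖ ^ 2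

/-- `S(α) = sup{|ĉ(f,0)| : f admissible, Q_α(f) ≤ 1}`, the value at `0` of the normalized
reproducing kernel. -/
def S (W : 𝕋c → ℂ) (ζ : ℕ → ℂ) (ν : ℕ → ℝ) : ℝ :=
  sSup { x | ∃ f, Admissible ζ f ∧ Q W ζ ν f ≤ 1 ∧ x = ‖fourierCoeff f 0‖ }

/-- The Blaschke product with zeros `ζ k`. -/
def Bprod (ζ : ℕ → ℂ) (z : ℂ) : ℂ :=
  ∏' k, ((‖ζ k‖ : ℂ) / ζ k) * ((ζ k - z) / (1 - conj (ζ k) * z))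

/-- Membership of the pair `(f₁, f₂)` in the space `V = L²_R` (with `φ` the boundary values
of the Szegő outer function `T_e`). -/
def MemV (R φ f₁ f₂ : 𝕋c → ℂ) : Prop :=
  AEStronglyMeasurable f₁ m ∧ AEStronglyMeasurable f₂ m ∧
  MemLp (fun t => φ t * f₁ t) 2 m ∧
  MemLp (fun t => conj (φ t) * f₂ t) 2 m ∧
  (∀ n : ℤ, 0 ≤ n → fourierCoeff (fun t => conj (φ t) * f₂ t) n = 0) ∧
  MemLp (fun t => R t * f₁ t + f₂ t) 2 m ∧
  (∀ n : ℤ, n < 0 → fourierCoeff (fun t => R t * f₁ t + f₂ t) n = 0)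

/-- The squared `V`-norm `‖(f₁,f₂)‖_V² = ∫ (|Rf₁+f₂|² + |φf₁|²) dm`. -/
def VnormSq (R φ f₁ f₂ : 𝕋c → ℂ) : ℝ :=
  ∫ t, (‖R t * f₁ t + f₂ t‖ ^ 2 + ‖φ t * f₁ t‖ ^ 2) ∂m

/-- Membership of the triple `(f₁, f₂, {f_k})` in `L²(α)`. -/
def MemL2α (R φ : 𝕋c → ℂ) (ν : ℕ → ℝ) (f₁ f₂ : 𝕋c → ℂ) (fk : ℕ → ℂ) : Prop :=
  MemV R φ f₁ f₂ ∧ Summable (fun k => ν k * ‖fk k‖ ^ 2)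

/-- The squared norm on `L²(α)`. -/
def αnormSq (R φ : 𝕋c → ℂ) (ν : ℕ → ℝ) (f₁ f₂ : 𝕋c → ℂ) (fk : ℕ → ℂ) : ℝ :=
  VnormSq R φ f₁ f₂ + ∑' k, ν k * ‖fk k‖ ^ 2

/-- Membership in `čH²(α)`: the triple lies in `L²(α)` and is approximated in the `L²(α)`
norm by embedded admissible functions `ι(f) = (f, −P₋(Rf), {f(ζ_k)})`. -/
def MemCheckH2 (R φ : 𝕋c → ℂ) (ζ : ℕ → ℂ) (ν : ℕ → ℝ)
    (f₁ f₂ : 𝕋c → ℂ) (fk : ℕ → ℂ) : Prop :=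
  MemL2α R φ ν f₁ f₂ fk ∧
  ∀ ε : ℝ, 0 < ε → ∃ f p : 𝕋c → ℂ, Admissible ζ f ∧ IsPneg (fun t => R t * f t) p ∧
    VnormSq R φ (fun t => f₁ t - f t) (fun t => f₂ t + p t) +
      ∑' k, ν k * ‖fk k - evalD f (ζ k)‖ ^ 2 < ε

/-- Membership in `ĤH²(α)`: `g := φf₁ ∈ H²` and `f_k·φ(ζ_k) = g(ζ_k)` for all `k`. -/
def MemHatH2 (R φ : 𝕋c → ℂ) (ζ : ℕ → ℂ) (ν : ℕ → ℝ)
    (f₁ f₂ : 𝕋c → ℂ) (fk : ℕ → ℂ) : Prop :=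
  MemL2α R φ ν f₁ f₂ fk ∧
  (∀ n : ℤ, n < 0 → fourierCoeff (fun t => φ t * f₁ t) n = 0) ∧
  ∀ k, fk k * evalD φ (ζ k) = evalD (fun t => φ t * f₁ t) (ζ k)

/-- The dual coefficient `R^τ`; note that on the additive circle, `conj t` corresponds
to `−t`, so `R^τ(s) = −R(conj s)·conj(φ(conj s))·β(conj s)/φ(conj s)`. -/
def dualR (R φ β : 𝕋c → ℂ) : 𝕋c → ℂ := fun s => -R (-s) * conj (φ (-s)) * β (-s) / φ (-s)

/-- `φ^τ(t) = conj(φ(conj t))`. -/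
def dualφ (φ : 𝕋c → ℂ) : 𝕋c → ℂ := fun s => conj (φ (-s))

/-- `β^τ(t) = conj(β(conj t))`. -/
def dualβ (β : 𝕋c → ℂ) : 𝕋c → ℂ := fun s => conj (β (-s))

/-- The reflected points `conj ζ_k`. -/
def dualζ (ζ : ℕ → ℂ) : ℕ → ℂ := fun k => conj (ζ k)

/-- The dual masses `ν^τ_k = |T_e(ζ_k)/B′(ζ_k)|²/ν_k`. -/
def dualν (φ : 𝕋c → ℂ) (ζ : ℕ → ℂ) (ν : ℕ → ℝ) : ℕ → ℝ :=
  fun k => ‖evalD φ (ζ k) / deriv (Bprod ζ) (ζ k)‖ ^ 2 / ν k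

/-- The defining relations of the map `τ` on triples: on the circle
`f₁(t) + conj(R(t))f₂(t) = conj(φ(t))β(t)·conj(t)·f₁^τ(conj t)` and
`R(t)f₁(t) + f₂(t) = φ(t)·conj(t)·f₂^τ(conj t)` (here `conj t ↔ −t` and the complex
number `t` is `fourier 1 t`), and `f^τ_k = −conj(B′(ζ_k)/T_e(ζ_k))·f_k·ν_k`. -/
def TauRel (R φ β : 𝕋c → ℂ) (ζ : ℕ → ℂ) (ν : ℕ → ℝ)
    (f₁ f₂ : 𝕋c → ℂ) (fk : ℕ → ℂ) (h₁ h₂ : 𝕋c → ℂ) (hk : ℕ → ℂ) : Prop :=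
  (∀ᵐ t ∂m, f₁ t + conj (R t) * f₂ t = conj (φ t) * β t * fourier (-1) t * h₁ (-t) ∧
      R t * f₁ t + f₂ t = φ t * fourier (-1) t * h₂ (-t)) ∧
  ∀ k, hk k = -conj (deriv (Bprod ζ) (ζ k) / evalD φ (ζ k)) * fk k * ν k

/-- Membership in `L²(α) ⊖ čH²(α)`: a triple of `L²(α)` orthogonal to every embedded
admissible function. -/
def PerpCheck (R φ : 𝕋c → ℂ) (ζ : ℕ → ℂ) (ν : ℕ → ℝ)
    (f₁ f₂ : 𝕋c → ℂ) (fk : ℕ → ℂ) : Prop :=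
  MemL2α R φ ν f₁ f₂ fk ∧
  ∀ f p : 𝕋c → ℂ, Admissible ζ f → IsPneg (fun t => R t * f t) p →
    (∫ t, ((R t * f₁ t + f₂ t) * conj (R t * f t + -p t) +
        (φ t * f₁ t) * conj (φ t * f t)) ∂m) +
      ∑' k, (ν k : ℂ) * fk k * conj (evalD f (ζ k)) = 0
open scoped ENNReal NNReal

lemma memLp_fourier (n : ℤ) (p : ℝ≥0∞) : MemLp (fun t : 𝕋c => fourier n t) p m :=
  MemLp.of_bound ((fourier n).continuous.aestronglyMeasurable) 1
    (Eventually.of_forall fun x => le_of_eq (Circle.norm_coe _))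

lemma fourierCoeff_ae_eq {f g : 𝕋c → ℂ} (h : f =ᵐ[m] g) (n : ℤ) :
    fourierCoeff f n = fourierCoeff g n := by
  unfold fourierCoeff
  exact integral_congr_ae (h.mono fun t ht => by dsimp only; rw [ht])

lemma myCoeff_toLp {f : 𝕋c → ℂ} (hf : MemLp f 2 m) (n : ℤ) :
    fourierCoeff (hf.toLp f) n = fourierCoeff f n :=
  fourierCoeff_ae_eq (hf.coeFn_toLp) n

lemma summable_coeff_sq {f : 𝕋c → ℂ} (hf : MemLp f 2 m) :
    Summable fun i : ℤ => ‖fourierCoeff f i‖ ^ 2 := by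
  have h := lp.memℓp (fourierBasis.repr (hf.toLp f))
  rw [memℓp_gen_iff (by norm_num : (0:ℝ) < (2:ℝ≥0∞).toReal)] at h
  simpa [fourierBasis_repr, myCoeff_toLp hf] using h

lemma integral_sq_congr {f g : 𝕋c → ℂ} (h : f =ᵐ[m] g) :
    ∫ t, ‖f t‖ ^ 2 ∂m = ∫ t, ‖g t‖ ^ 2 ∂m :=
  integral_congr_ae (h.mono fun t ht => by dsimp only; rw [ht])

lemma parseval {f : 𝕋c → ℂ} (hf : MemLp f 2 m) :
    (∑' i : ℤ, ‖fourierCoeff f i‖ ^ 2) = ∫ t, ‖f t‖ ^ 2 ∂m := by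
  have := tsum_sq_fourierCoeff (hf.toLp f)
  
  calc (∑' i : ℤ, ‖fourierCoeff f i‖ ^ 2)
      = ∑' i : ℤ, ‖fourierCoeff (hf.toLp f) i‖ ^ 2 := by
        simp only [myCoeff_toLp hf]
    _ = ∫ t, ‖(hf.toLp f : 𝕋c → ℂ) t‖ ^ 2 ∂m := this
    _ = ∫ t, ‖f t‖ ^ 2 ∂m := integral_sq_congr hf.coeFn_toLp

lemma coeff_sq_le {f : 𝕋c → ℂ} (hf : MemLp f 2 m) (n : ℤ) :
    ‖fourierCoeff f n‖ ^ 2 ≤ ∫ t, ‖f t‖ ^ 2 ∂m := by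
  rw [← parseval hf]
  exact Summable.le_tsum (summable_coeff_sq hf) n fun j _ => by positivity

lemma integrable_of_L2 {f : 𝕋c → ℂ} (hf : MemLp f 2 m) : Integrable f m :=
  hf.integrable (by norm_num)

lemma integrable_fourier_smul {f : 𝕋c → ℂ} (hf : Integrable f m) (n : ℤ) :
    Integrable (fun t => fourier n t • f t) m := by
  simpa [smul_eq_mul] using hf.bdd_mul ((fourier n).continuous.aestronglyMeasurable)
    (Eventually.of_forall fun t => le_of_eq (Circle.norm_coe _))

lemma myCoeff_sub {f g : 𝕋c → ℂ} (hf : Integrable f m) (hg : Integrable g m) (n : ℤ) :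
    fourierCoeff (fun t => f t - g t) n = fourierCoeff f n - fourierCoeff g n := by
  unfold fourierCoeff
  rw [← integral_sub (integrable_fourier_smul hf _) (integrable_fourier_smul hg _)]
  congr 1; funext t; exact smul_sub _ _ _

lemma memLp_const_mul_top {φ : 𝕋c → ℂ} (hφ : MemLp φ ⊤ m) {f : 𝕋c → ℂ} (hf : MemLp f 2 m) :
    MemLp (fun t => φ t * f t) 2 m := by
  have := hf.mul' (r := 2) hφ
  simpa [Pi.smul_apply', smul_eq_mul] using this

local notation "⟪" x ", " y "⟫" => @inner ℂ _ _ x y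

lemma memLp_conj_top {φ : 𝕋c → ℂ} (hφ : MemLp φ ⊤ m) :
    MemLp (fun t => conj (φ t)) ⊤ m :=
  hφ.of_le (RCLike.continuous_conj.comp_aestronglyMeasurable hφ.1)
    (Eventually.of_forall fun t => by simp)

lemma conv_coeff {φ f : 𝕋c → ℂ} (hφ : MemLp φ ⊤ m) (hf : MemLp f 2 m) (n : ℤ) :
    fourierCoeff (fun t => φ t * f t) n
      = ∑' j : ℤ, fourierCoeff φ (n - j) * fourierCoeff f j := by
  set u : 𝕋c → ℂ := fun t => conj (φ t) * fourier n t with hu_def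
  have hu : MemLp u 2 m := memLp_const_mul_top (memLp_conj_top hφ) (memLp_fourier n 2)
  set U := hu.toLp u with hU
  set V := hf.toLp f with hV
  have key := fourierBasis.tsum_inner_mul_inner U V
  have inner1 : ∀ i : ℤ, ⟪(fourierBasis (T := 2 * Real.pi) i), V⟫ = fourierCoeff f i := by
    intro i
    rw [← fourierBasis.repr_apply_apply, fourierBasis_repr, myCoeff_toLp hf]
  have hcu : ∀ i : ℤ, fourierCoeff u i = conj (fourierCoeff φ (n - i)) := by
    intro i
    unfold fourierCoeff
    rw [← integral_conj]
    congr 1; funext t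
    have h1 : (fourier (-(n - i)) t : ℂ) = fourier (-n) t * fourier i t := by
      rw [show -(n - i) = -n + i by ring, fourier_add]
    have h2 : (fourier (-i) t : ℂ) = conj (fourier i t) := fourier_neg
    have h3 : (fourier (-n) t : ℂ) = conj (fourier n t) := fourier_neg
    simp only [smul_eq_mul, hu_def, map_mul, h1, RingHom.id_apply, starRingEnd_self_apply]
    rw [h2, h3]
    ring_nf
    rw [Complex.conj_conj]
  have inner2 : ∀ i : ℤ, ⟪U, (fourierBasis (T := 2 * Real.pi) i)⟫
      = fourierCoeff φ (n - i) := by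
    intro i
    rw [← inner_conj_symm, ← fourierBasis.repr_apply_apply, fourierBasis_repr,
      myCoeff_toLp hu, hcu i, Complex.conj_conj]
  have inner3 : ⟪U, V⟫ = fourierCoeff (fun t => φ t * f t) n := by
    rw [MeasureTheory.L2.inner_def]
    unfold fourierCoeff
    apply integral_congr_ae
    filter_upwards [hu.coeFn_toLp, hf.coeFn_toLp] with t htu htf
    rw [RCLike.inner_apply, htu, htf]
    simp only [hu_def, map_mul, Complex.conj_conj, smul_eq_mul]
    rw [show conj (fourier n t : ℂ) = fourier (-n) t from fourier_neg.symm]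
    ring
  rw [← inner3, ← key]
  congr 1; funext i
  rw [inner1 i, inner2 i]

lemma conv_coeff_neg {φ f : 𝕋c → ℂ} (hφ : MemLp φ ⊤ m) (hf : MemLp f 2 m)
    (hφH : ∀ n : ℤ, n < 0 → fourierCoeff φ n = 0) (hfH : ∀ n : ℤ, n < 0 → fourierCoeff f n = 0)
    {n : ℤ} (hn : n < 0) : fourierCoeff (fun t => φ t * f t) n = 0 := by
  rw [conv_coeff hφ hf]
  have h : ∀ j : ℤ, fourierCoeff φ (n - j) * fourierCoeff f j = 0 := by
    intro j
    rcases lt_or_ge j 0 with h | h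
    · rw [hfH j h, mul_zero]
    · rw [hφH (n - j) (by omega), zero_mul]
  rw [tsum_congr h, tsum_zero]

lemma coeff_norm_le {f : 𝕋c → ℂ} (hf : MemLp f 2 m) (n : ℤ) :
    ‖fourierCoeff f n‖ ≤ Real.sqrt (∫ t, ‖f t‖ ^ 2 ∂m) := by
  rw [show ‖fourierCoeff f n‖ = Real.sqrt (‖fourierCoeff f n‖ ^ 2) by
    rw [Real.sqrt_sq (norm_nonneg _)]]
  exact Real.sqrt_le_sqrt (coeff_sq_le hf n)

lemma summable_eval {f : 𝕋c → ℂ} (hf : MemLp f 2 m) {w : ℂ} (hw : ‖w‖ < 1) :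
    Summable fun k : ℕ => ‖fourierCoeff f (k : ℤ) * w ^ k‖ := by
  refine Summable.of_nonneg_of_le (fun k => norm_nonneg _) (fun k => ?_)
    (((summable_geometric_of_lt_one (norm_nonneg w) hw).mul_left
      (Real.sqrt (∫ t, ‖f t‖ ^ 2 ∂m))))
  rw [norm_mul, norm_pow]
  exact mul_le_mul_of_nonneg_right (coeff_norm_le hf k) (by positivity)

lemma evalD_norm_le {f : 𝕋c → ℂ} (hf : MemLp f 2 m) {w : ℂ} (hw : ‖w‖ < 1) :
    ‖evalD f w‖ ≤ Real.sqrt (∫ t, ‖f t‖ ^ 2 ∂m) * (1 - ‖w‖)⁻¹ := by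
  have h1 := norm_tsum_le_tsum_norm (summable_eval hf hw)
  refine h1.trans ?_
  have h2 : ∑' k : ℕ, ‖fourierCoeff f (k : ℤ) * w ^ k‖
      ≤ ∑' k : ℕ, Real.sqrt (∫ t, ‖f t‖ ^ 2 ∂m) * ‖w‖ ^ k := by
    apply Summable.tsum_le_tsum _ (summable_eval hf hw)
      ((summable_geometric_of_lt_one (norm_nonneg w) hw).mul_left _)
    intro k
    rw [norm_mul, norm_pow]
    exact mul_le_mul_of_nonneg_right (coeff_norm_le hf k) (by positivity)
  refine h2.trans ?_
  rw [tsum_mul_left, tsum_geometric_of_lt_one (norm_nonneg w) hw]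

lemma evalD_sub {f g : 𝕋c → ℂ} (hf : MemLp f 2 m) (hg : MemLp g 2 m) {w : ℂ}
    (hw : ‖w‖ < 1) : evalD (fun t => f t - g t) w = evalD f w - evalD g w := by
  unfold evalD
  rw [← Summable.tsum_sub ((summable_eval hf hw).of_norm) ((summable_eval hg hw).of_norm)]
  apply tsum_congr
  intro k
  rw [myCoeff_sub (integrable_of_L2 hf) (integrable_of_L2 hg), sub_mul]

lemma coeff_prod_range {φ f : 𝕋c → ℂ} (hφ : MemLp φ ⊤ m) (hf : MemLp f 2 m)
    (hφH : ∀ n : ℤ, n < 0 → fourierCoeff φ n = 0) (hfH : ∀ n : ℤ, n < 0 → fourierCoeff f n = 0)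
    (n : ℕ) :
    fourierCoeff (fun t => φ t * f t) (n : ℤ)
      = ∑ k ∈ Finset.range (n+1), fourierCoeff φ (k : ℤ) * fourierCoeff f ((n : ℤ) - k) := by
  rw [conv_coeff hφ hf]
  have hsum : ∑' j : ℤ, fourierCoeff φ ((n : ℤ) - j) * fourierCoeff f j
      = ∑ j ∈ (Finset.range (n+1)).map ⟨(Nat.cast : ℕ → ℤ), Nat.cast_injective⟩,
          fourierCoeff φ ((n : ℤ) - j) * fourierCoeff f j := by
    apply tsum_eq_sum
    intro j hj
    simp only [Finset.mem_map, Finset.mem_range, Function.Embedding.coeFn_mk] at hj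
    rcases lt_or_ge j 0 with h | h
    · rw [hfH j h, mul_zero]
    · have hgt : (n : ℤ) < j := by
        by_contra hc
        push_neg at hc
        exact hj ⟨j.toNat, by omega, by omega⟩
      rw [hφH (↑n - j) (by omega), zero_mul]
  rw [hsum, Finset.sum_map]
  simp only [Function.Embedding.coeFn_mk]
  conv_lhs => rw [← Finset.sum_range_reflect]
  apply Finset.sum_congr rfl
  intro k hk
  simp only [Finset.mem_range] at hk
  have h1 : ((n + 1 - 1 - k : ℕ) : ℤ) = (n : ℤ) - k := by omega
  rw [h1, show (n : ℤ) - ((n : ℤ) - k) = k by ring]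

lemma evalD_mul {φ f : 𝕋c → ℂ} (hφ : MemLp φ ⊤ m) (hf : MemLp f 2 m)
    (hφH : ∀ n : ℤ, n < 0 → fourierCoeff φ n = 0) (hfH : ∀ n : ℤ, n < 0 → fourierCoeff f n = 0)
    {w : ℂ} (hw : ‖w‖ < 1) :
    evalD (fun t => φ t * f t) w = evalD φ w * evalD f w := by
  have hφ2 : MemLp φ 2 m := hφ.mono_exponent le_top
  unfold evalD
  rw [tsum_mul_tsum_eq_tsum_sum_range_of_summable_norm (summable_eval hφ2 hw)
    (summable_eval hf hw)]
  apply tsum_congr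
  intro n
  rw [coeff_prod_range hφ hf hφH hfH n, Finset.sum_mul]
  apply Finset.sum_congr rfl
  intro k hk
  simp only [Finset.mem_range] at hk
  have h1 : ((n - k : ℕ) : ℤ) = (n : ℤ) - k := by omega
  rw [h1]
  have h2 : w ^ k * w ^ (n - k) = w ^ n := by
    rw [← pow_add]; congr 1; omega
  rw [← h2]; ring

lemma coeff_fourier (j n : ℤ) :
    fourierCoeff (fun t : 𝕋c => fourier j t) n = if n = j then 1 else 0 := by
  have h1 : fourierCoeff (fun t : 𝕋c => fourier j t) n
      = fourierCoeff (fourierLp (T := 2 * Real.pi) 2 j) n :=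
    fourierCoeff_ae_eq ((coeFn_fourierLp 2 j).symm) n
  rw [h1, ← fourierBasis_repr]
  rw [show (fourierLp (T := 2 * Real.pi) 2 j) = fourierBasis j by rw [coe_fourierBasis]]
  rw [fourierBasis.repr_self]
  classical
  rw [lp.single_apply]
  simp [Pi.single_apply]

lemma myCoeff_sum {ι : Type*} (s : Finset ι) (F : ι → 𝕋c → ℂ)
    (hF : ∀ i ∈ s, Integrable (F i) m) (n : ℤ) :
    fourierCoeff (fun t => ∑ i ∈ s, F i t) n = ∑ i ∈ s, fourierCoeff (F i) n := by
  unfold fourierCoeff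
  rw [← integral_finset_sum s (fun i hi => integrable_fourier_smul (hF i hi) (-n))]
  congr 1; funext t; rw [Finset.smul_sum]

lemma coeff_poly_neg {N : ℕ} {c : ℕ → ℂ} {n : ℤ} (hn : n < 0) :
    fourierCoeff (fun t : 𝕋c => ∑ j ∈ Finset.range N, c j * fourier (j : ℤ) t) n = 0 := by
  rw [myCoeff_sum (Finset.range N) (fun j t => c j * fourier (j : ℤ) t) (fun j _ =>
    (memLp_one_iff_integrable.mp ((memLp_fourier (j : ℤ) 1).const_mul (c j))))]
  apply Finset.sum_eq_zero
  intro j hj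
  have : fourierCoeff (fun t : 𝕋c => c j * fourier (j : ℤ) t) n
      = c j * fourierCoeff (fun t : 𝕋c => fourier (j : ℤ) t) n :=
    fourierCoeff.const_mul _ _ _
  rw [this, coeff_fourier]
  rw [if_neg (by omega)]
  ring

lemma memLp_poly {N : ℕ} {c : ℕ → ℂ} (p : ℝ≥0∞) :
    MemLp (fun t : 𝕋c => ∑ j ∈ Finset.range N, c j * fourier (j : ℤ) t) p m :=
  memLp_finsetSum _ (fun j _ => (memLp_fourier (j : ℤ) p).const_mul (c j))

lemma coeff_one (n : ℤ) : fourierCoeff (fun _ : 𝕋c => (1 : ℂ)) n = if n = 0 then 1 else 0 := by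
  have : (fun _ : 𝕋c => (1 : ℂ)) = fun t : 𝕋c => fourier (0 : ℤ) t := by
    funext t; rw [fourier_zero]
  rw [this, coeff_fourier]

lemma evalD_one {w : ℂ} : evalD (fun _ : 𝕋c => (1 : ℂ)) w = 1 := by
  unfold evalD
  have h : ∀ k : ℕ, fourierCoeff (fun _ : 𝕋c => (1 : ℂ)) (k : ℤ) * w ^ k
      = if k = 0 then 1 else 0 := by
    intro k
    rw [coeff_one]
    rcases Nat.eq_zero_or_pos k with h | h
    · simp [h]
    · rw [if_neg (by omega), if_neg (by omega)]; ring
  rw [tsum_congr h, tsum_ite_eq]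

lemma outer_nonvanish {φ : 𝕋c → ℂ} (hφb : MemLp φ ⊤ m) (hφout : IsOuter φ)
    {w : ℂ} (hw : ‖w‖ < 1) : evalD φ w ≠ 0 := by
  intro h0
  have hwpos : 0 < 1 - ‖w‖ := by linarith
  set ε := ((1 - ‖w‖) / 2) ^ 2 with hε
  have hεpos : 0 < ε := by positivity
  have hone : InH2 (fun _ : 𝕋c => (1 : ℂ)) := by
    refine ⟨memLp_const 1, fun n hn => ?_⟩
    rw [coeff_one, if_neg (by omega)]
  obtain ⟨p, hpoly, hclose⟩ := hφout.2 _ hone ε hεpos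
  obtain ⟨N, c, rfl⟩ := hpoly
  set p : 𝕋c → ℂ := fun t => ∑ j ∈ Finset.range N, c j * fourier (j : ℤ) t with hp
  have hp2 : MemLp p 2 m := memLp_poly 2
  have hq2 : MemLp (fun t => φ t * p t) 2 m := memLp_const_mul_top hφb hp2
  have hd2 : MemLp (fun t => φ t * p t - 1) 2 m := hq2.sub (memLp_const 1)
  have heval : evalD (fun t => φ t * p t - (1:ℂ)) w = -1 := by
    have h1 : evalD (fun t => φ t * p t - (fun _ : 𝕋c => (1:ℂ)) t) w
        = evalD (fun t => φ t * p t) w - evalD (fun _ : 𝕋c => (1:ℂ)) w :=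
      evalD_sub hq2 (memLp_const 1) hw
    have h2 : evalD (fun t => φ t * p t) w = evalD φ w * evalD p w :=
      evalD_mul hφb hp2 hφout.1.2 (fun n hn => coeff_poly_neg hn) hw
    simpa [h2, h0, evalD_one] using h1
  have hbound := evalD_norm_le hd2 hw
  rw [heval] at hbound
  have hnorm : ‖(-1 : ℂ)‖ = 1 := by simp
  rw [hnorm] at hbound
  have hsqrt : Real.sqrt (∫ t, ‖φ t * p t - 1‖ ^ 2 ∂m) < (1 - ‖w‖) / 2 := by
    have h1 : Real.sqrt (∫ t, ‖φ t * p t - 1‖ ^ 2 ∂m) < Real.sqrt ε :=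
      Real.sqrt_lt_sqrt (integral_nonneg fun t => by positivity) hclose
    rwa [hε, Real.sqrt_sq (by positivity)] at h1
  have : (1:ℝ) < 1 := by
    calc (1:ℝ) ≤ Real.sqrt (∫ t, ‖φ t * p t - 1‖ ^ 2 ∂m) * (1 - ‖w‖)⁻¹ := hbound
    _ < ((1 - ‖w‖) / 2) * (1 - ‖w‖)⁻¹ := by
        apply mul_lt_mul_of_pos_right hsqrt (by positivity)
    _ = (1 - ‖w‖) * (1 - ‖w‖)⁻¹ / 2 := by ring
    _ = 1 / 2 := by rw [mul_inv_cancel₀ (ne_of_gt hwpos)]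
    _ < 1 := by norm_num
  exact absurd this (lt_irrefl 1)

lemma integrable_sq_of_L2 {f : 𝕋c → ℂ} (hf : MemLp f 2 m) :
    Integrable (fun t => ‖f t‖ ^ 2) m := by
  have h := hf.integrable_norm_rpow (by norm_num) (by norm_num)
  have h2 : (2 : ℝ≥0∞).toReal = (2 : ℝ) := by norm_num
  rw [h2] at h
  apply h.congr
  filter_upwards with t
  rw [← Real.rpow_natCast ‖f t‖ 2]
  norm_num

lemma approx_extract {R φ : 𝕋c → ℂ} (hRm : MemLp R ⊤ m) (hφb : MemLp φ ⊤ m)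
    {ζ : ℕ → ℂ} {ν : ℕ → ℝ} (hν : ∀ k, 0 < ν k)
    {f₁ f₂ : 𝕋c → ℂ} {fk : ℕ → ℂ}
    (hφf₁ : MemLp (fun t => φ t * f₁ t) 2 m)
    (hRf₁ : MemLp (fun t => R t * f₁ t + f₂ t) 2 m)
    (hSumm : Summable (fun k => ν k * ‖fk k‖ ^ 2))
    {f p : 𝕋c → ℂ} (hadm : Admissible ζ f) (hPneg : IsPneg (fun t => R t * f t) p)
    {δ : ℝ}
    (hlt : VnormSq R φ (fun t => f₁ t - f t) (fun t => f₂ t + p t) +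
      ∑' k, ν k * ‖fk k - evalD f (ζ k)‖ ^ 2 < δ) :
    (∫ t, ‖φ t * f₁ t - φ t * f t‖ ^ 2 ∂m) < δ ∧
    ∀ k, ν k * ‖fk k - evalD f (ζ k)‖ ^ 2 < δ := by
  have hf2 : MemLp f 2 m := hadm.1.1
  have hφf : MemLp (fun t => φ t * f t) 2 m := memLp_const_mul_top hφb hf2
  have hφd : MemLp (fun t => φ t * f₁ t - φ t * f t) 2 m := hφf₁.sub hφf
  have hRfL2 : MemLp (fun t => R t * f t) 2 m := memLp_const_mul_top hRm hf2
  have hA : MemLp (fun t => R t * (f₁ t - f t) + (f₂ t + p t)) 2 m := by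
    have heq : (fun t => R t * (f₁ t - f t) + (f₂ t + p t))
        = fun t => ((R t * f₁ t + f₂ t) - R t * f t) + p t := by
      funext t; ring
    rw [heq]
    exact (hRf₁.sub hRfL2).add hPneg.1
  have hAint : Integrable (fun t => ‖R t * (f₁ t - f t) + (f₂ t + p t)‖ ^ 2) m :=
    integrable_sq_of_L2 hA
  have hBint : Integrable (fun t => ‖φ t * f₁ t - φ t * f t‖ ^ 2) m :=
    integrable_sq_of_L2 hφd
  have hVsplit : VnormSq R φ (fun t => f₁ t - f t) (fun t => f₂ t + p t)
      = (∫ t, ‖R t * (f₁ t - f t) + (f₂ t + p t)‖ ^ 2 ∂m)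
        + ∫ t, ‖φ t * f₁ t - φ t * f t‖ ^ 2 ∂m := by
    unfold VnormSq
    rw [← integral_add hAint hBint]
    apply integral_congr_ae
    filter_upwards with t
    have : φ t * (f₁ t - f t) = φ t * f₁ t - φ t * f t := by ring
    simp only [this]
  have htsum_nonneg : (0:ℝ) ≤ ∑' k, ν k * ‖fk k - evalD f (ζ k)‖ ^ 2 :=
    tsum_nonneg fun j => mul_nonneg (hν j).le (by positivity)
  have hAnn : (0:ℝ) ≤ ∫ t, ‖R t * (f₁ t - f t) + (f₂ t + p t)‖ ^ 2 ∂m :=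
    integral_nonneg fun t => by positivity
  constructor
  · calc (∫ t, ‖φ t * f₁ t - φ t * f t‖ ^ 2 ∂m)
        ≤ VnormSq R φ (fun t => f₁ t - f t) (fun t => f₂ t + p t) := by
          rw [hVsplit]; linarith
    _ ≤ VnormSq R φ (fun t => f₁ t - f t) (fun t => f₂ t + p t)
        + ∑' k, ν k * ‖fk k - evalD f (ζ k)‖ ^ 2 := by linarith
    _ < δ := hlt
  · intro k
    have hV_nonneg : (0:ℝ) ≤ VnormSq R φ (fun t => f₁ t - f t) (fun t => f₂ t + p t) := by
      rw [hVsplit]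
      have := integral_nonneg (μ := m)
        (f := fun t => ‖φ t * f₁ t - φ t * f t‖ ^ 2) (fun t => by positivity)
      linarith
    have hS : Summable (fun j => ν j * ‖fk j - evalD f (ζ j)‖ ^ 2) := by
      have hfin := hadm.2
      have hd : Summable (fun j => ν j * ‖fk j - evalD f (ζ j)‖ ^ 2 - ν j * ‖fk j‖ ^ 2) := by
        apply summable_of_ne_finset_zero (s := hfin.toFinset)
        intro j hj
        rw [Set.Finite.mem_toFinset] at hj
        simp only [Set.mem_setOf_eq, not_not] at hj
        rw [hj]
        simp
      exact (hSumm.add hd).congr fun j => by ring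
    calc ν k * ‖fk k - evalD f (ζ k)‖ ^ 2
        ≤ ∑' j, ν j * ‖fk j - evalD f (ζ j)‖ ^ 2 :=
          Summable.le_tsum hS k fun j _ => mul_nonneg (hν j).le (by positivity)
    _ ≤ VnormSq R φ (fun t => f₁ t - f t) (fun t => f₂ t + p t)
        + ∑' j, ν j * ‖fk j - evalD f (ζ j)‖ ^ 2 := by linarith
    _ < δ := hlt

/-- Lemma 1.3: if `F = (f₁, f₂, {f_k}) ∈ čH²(α)` then `g := φf₁ ∈ H²`,
`φ(ζ_k) ≠ 0`, and `f_k·φ(ζ_k) = g(ζ_k)` for all `k`; in particular `čH²(α) ⊆ ĤH²(α)`. -/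
theorem check_subset_hat (R : 𝕋c → ℂ) (hRm : MemLp R ⊤ m)
    (hR1 : ∀ᵐ t ∂m, ‖R t‖ ≤ 1)
    (hSz : Integrable (fun t => Real.log (1 - ‖R t‖)) m)
    (φ : 𝕋c → ℂ) (hφb : MemLp φ ⊤ m) (hφout : IsOuter φ)
    (hφR : ∀ᵐ t ∂m, ‖φ t‖ ^ 2 = 1 - ‖R t‖ ^ 2)
    (hφ0 : ∃ c : ℝ, 0 < c ∧ fourierCoeff φ 0 = c)
    (ζ : ℕ → ℂ) (hζ : ∀ k, ‖ζ k‖ < 1) (hBl : Summable fun k => 1 - ‖ζ k‖)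
    (ν : ℕ → ℝ) (hν : ∀ k, 0 < ν k)
    (f₁ f₂ : 𝕋c → ℂ) (fk : ℕ → ℂ) (hF : MemCheckH2 R φ ζ ν f₁ f₂ fk) :
    (∀ n : ℤ, n < 0 → fourierCoeff (fun t => φ t * f₁ t) n = 0) ∧
      ∀ k, evalD φ (ζ k) ≠ 0 ∧
        fk k * evalD φ (ζ k) = evalD (fun t => φ t * f₁ t) (ζ k) := by
  obtain ⟨⟨hMemV, hSumm⟩, happrox⟩ := hF
  obtain ⟨hf₁m, hf₂m, hφf₁, hconjφf₂, hH2neg, hRf₁, hRfH⟩ := hMemV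
  have hφH : ∀ n : ℤ, n < 0 → fourierCoeff φ n = 0 := hφout.1.2
  constructor
  · -- negative Fourier coefficients of φ f₁ vanish
    intro n hn
    by_contra hne
    have hpos : 0 < ‖fourierCoeff (fun t => φ t * f₁ t) n‖ ^ 2 := by
      have := norm_pos_iff.mpr hne
      positivity
    obtain ⟨f, p, hadm, hPneg, hlt⟩ :=
      happrox (‖fourierCoeff (fun t => φ t * f₁ t) n‖ ^ 2) hpos
    have hext := approx_extract hRm hφb hν hφf₁ hRf₁ hSumm hadm hPneg hlt
    have hf2 : MemLp f 2 m := hadm.1.1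
    have hφf : MemLp (fun t => φ t * f t) 2 m := memLp_const_mul_top hφb hf2
    have hφd : MemLp (fun t => φ t * f₁ t - φ t * f t) 2 m := hφf₁.sub hφf
    have hzero : fourierCoeff (fun t => φ t * f t) n = 0 :=
      conv_coeff_neg hφb hf2 hφH hadm.1.2 hn
    have hceq : fourierCoeff (fun t => φ t * f₁ t - φ t * f t) n
        = fourierCoeff (fun t => φ t * f₁ t) n := by
      rw [myCoeff_sub (integrable_of_L2 hφf₁) (integrable_of_L2 hφf), hzero, sub_zero]
    have hle := coeff_sq_le hφd n
    rw [hceq] at hle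
    exact absurd (lt_of_le_of_lt hle hext.1) (lt_irrefl _)
  · -- evaluation identity at each ζ k
    intro k
    set w := ζ k with hw_def
    have hw : ‖w‖ < 1 := hζ k
    have hwpos : 0 < 1 - ‖w‖ := by linarith
    refine ⟨outer_nonvanish hφb hφout hw, ?_⟩
    by_contra hne
    set D := fk k * evalD φ w - evalD (fun t => φ t * f₁ t) w with hD_def
    have hDne : D ≠ 0 := sub_ne_zero.mpr hne
    have hDpos : 0 < ‖D‖ := norm_pos_iff.mpr hDne
    -- show ‖D‖ ≤ ε for every ε > 0
    have hkey : ∀ ε : ℝ, 0 < ε → ‖D‖ ≤ ε := by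
      intro ε hε
      set c₁ : ℝ := ε / (2 * (‖evalD φ w‖ + 1)) with hc₁
      have hc₁pos : 0 < c₁ := by positivity
      set δ : ℝ := min (ν k * c₁ ^ 2) ((ε * (1 - ‖w‖) / 2) ^ 2) with hδ
      have hδpos : 0 < δ := lt_min (mul_pos (hν k) (by positivity)) (by positivity)
      obtain ⟨f, p, hadm, hPneg, hlt⟩ := happrox δ hδpos
      have hext := approx_extract hRm hφb hν hφf₁ hRf₁ hSumm hadm hPneg hlt
      have hf2 : MemLp f 2 m := hadm.1.1
      have hφf : MemLp (fun t => φ t * f t) 2 m := memLp_const_mul_top hφb hf2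
      have hφd : MemLp (fun t => φ t * f₁ t - φ t * f t) 2 m := hφf₁.sub hφf
      -- bound on fk k - evalD f w
      have h1 : ν k * ‖fk k - evalD f w‖ ^ 2 < δ := hext.2 k
      have hb1 : ‖fk k - evalD f w‖ ≤ c₁ := by
        have hsq : ‖fk k - evalD f w‖ ^ 2 ≤ c₁ ^ 2 := by
          have hδ1 : δ ≤ ν k * c₁ ^ 2 := min_le_left _ _
          nlinarith [hν k, sq_nonneg (‖fk k - evalD f w‖)]
        have := Real.sqrt_le_sqrt hsq
        rwa [Real.sqrt_sq (norm_nonneg _), Real.sqrt_sq hc₁pos.le] at this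
      -- bound on eval difference
      have h2 : (∫ t, ‖φ t * f₁ t - φ t * f t‖ ^ 2 ∂m) < δ := hext.1
      have hb2 : ‖evalD (fun t => φ t * f₁ t) w - evalD (fun t => φ t * f t) w‖ ≤ ε / 2 := by
        rw [← evalD_sub hφf₁ hφf hw]
        refine (evalD_norm_le hφd hw).trans ?_
        have hs : Real.sqrt (∫ t, ‖φ t * f₁ t - φ t * f t‖ ^ 2 ∂m)
            ≤ ε * (1 - ‖w‖) / 2 := by
          have hδ2 : δ ≤ (ε * (1 - ‖w‖) / 2) ^ 2 := min_le_right _ _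
          have := Real.sqrt_le_sqrt (le_of_lt (lt_of_lt_of_le h2 hδ2))
          rwa [Real.sqrt_sq (by positivity)] at this
        calc Real.sqrt (∫ t, ‖φ t * f₁ t - φ t * f t‖ ^ 2 ∂m) * (1 - ‖w‖)⁻¹
            ≤ (ε * (1 - ‖w‖) / 2) * (1 - ‖w‖)⁻¹ :=
              mul_le_mul_of_nonneg_right hs (by positivity)
          _ = (ε / 2) * ((1 - ‖w‖) * (1 - ‖w‖)⁻¹) := by ring
          _ = ε / 2 := by rw [mul_inv_cancel₀ (ne_of_gt hwpos), mul_one]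
      have h3 : evalD (fun t => φ t * f t) w = evalD φ w * evalD f w :=
        evalD_mul hφb hf2 hφH hadm.1.2 hw
      have hsplit : D = (fk k - evalD f w) * evalD φ w
          + (evalD (fun t => φ t * f t) w - evalD (fun t => φ t * f₁ t) w) := by
        rw [hD_def, h3]; ring
      calc ‖D‖ ≤ ‖(fk k - evalD f w) * evalD φ w‖
            + ‖evalD (fun t => φ t * f t) w - evalD (fun t => φ t * f₁ t) w‖ := by
            rw [hsplit]; exact norm_add_le _ _
        _ ≤ c₁ * ‖evalD φ w‖ + ε / 2 := by
            gcongr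
            · rw [norm_mul]
              exact mul_le_mul_of_nonneg_right hb1 (norm_nonneg _)
            · rw [norm_sub_rev]; exact hb2
        _ ≤ c₁ * (‖evalD φ w‖ + 1) + ε / 2 := by
            have := mul_le_mul_of_nonneg_left
              (by linarith [norm_nonneg (evalD φ w)] : ‖evalD φ w‖ ≤ ‖evalD φ w‖ + 1) hc₁pos.le
            linarith
        _ = ε / 2 + ε / 2 := by
            rw [hc₁]
            field_simp
        _ = ε := by ring
    have := hkey (‖D‖ / 2) (by positivity)
    linarith
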